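/- For every source p, R*_opt(p) ≥ inf over positive integers μ of (μ + lg max(p(1), (1 − p(1))/(2^μ − 1))), and this infimum over μ is attained. -/

import Mathlib

/-- A source: a positive, monotonically nonincreasing probability mass function on `Fin n`. -/
def IsSource (n : ℕ) (p : Fin n → ℝ) : Prop :=
  (∀ i, 0 < p i) ∧ (∑ i, p i = 1) ∧ (∀ i j : Fin n, i ≤ j → p j ≤ p i)

/-- A codeword-length vector: positive integer lengths satisfying the Kraft inequality. -/
def IsCLV (n : ℕ) (l : Fin n → ℤ) : Prop :=
  (∀ i, 1 ≤ l i) ∧ (∑ i, (2:ℝ) ^ (-(l i)) ≤ 1)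

/-- Maximum pointwise redundancy `R*(l,p) = max_i (l(i) + lg p(i))`. -/
noncomputable def Rstar (n : ℕ) (l : Fin n → ℤ) (p : Fin n → ℝ) : ℝ :=
  ⨆ i : Fin n, ((l i : ℝ) + Real.logb 2 (p i))

/-- Minimum maximum pointwise redundancy over all codeword-length vectors. -/
noncomputable def RstarOpt (n : ℕ) (p : Fin n → ℝ) : ℝ :=
  sInf {r : ℝ | ∃ l : Fin n → ℤ, IsCLV n l ∧ Rstar n l p = r}


noncomputable def gfun (q : ℝ) (μ : ℕ) : ℝ :=
  (μ:ℝ) + Real.logb 2 (max q ((1 - q) / ((2:ℝ) ^ μ - 1)))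

lemma gfun_lb (q : ℝ) (hq : 0 < q) (ν : ℕ) :
    (ν:ℝ) + Real.logb 2 q ≤ gfun q ν := by
  unfold gfun
  have hmax : 0 < max q ((1 - q) / ((2:ℝ) ^ ν - 1)) := lt_of_lt_of_le hq (le_max_left _ _)
  have := (Real.logb_le_logb one_lt_two hq hmax).mpr (le_max_left _ _)
  linarith

lemma exists_min_gfun (q : ℝ) (hq : 0 < q) :
    ∃ μ : ℕ, 1 ≤ μ ∧ ∀ ν : ℕ, 1 ≤ ν → gfun q μ ≤ gfun q ν := by
  set c := Real.logb 2 q with hc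
  set N : ℕ := ⌈gfun q 1 - c⌉₊ + 1 with hN
  have h1N : 1 ∈ Finset.Icc 1 N := by simp [hN]
  obtain ⟨μ, hμmem, hmin⟩ := Finset.exists_min_image (Finset.Icc 1 N) (gfun q) ⟨1, h1N⟩
  have hμIcc := Finset.mem_Icc.mp hμmem
  refine ⟨μ, hμIcc.1, fun ν hν => ?_⟩
  by_cases hcase : ν ≤ N
  · exact hmin ν (Finset.mem_Icc.mpr ⟨hν, hcase⟩)
  · have hνN : N + 1 ≤ ν := by omega
    have h1 : (N:ℝ) + 1 ≤ (ν:ℝ) := by exact_mod_cast hνN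
    have h2 : gfun q 1 - c ≤ (⌈gfun q 1 - c⌉₊ : ℝ) := Nat.le_ceil _
    have h3 : (ν:ℝ) + c ≤ gfun q ν := gfun_lb q hq ν
    have h4 : gfun q μ ≤ gfun q 1 := hmin 1 h1N
    have h5 : (N:ℝ) = (⌈gfun q 1 - c⌉₊ : ℝ) + 1 := by exact_mod_cast rfl
    linarith

lemma key_ineq (n : ℕ) (hn : 2 ≤ n) (p : Fin n → ℝ) (hp : IsSource n p)
    (i0 : Fin n) (h0 : (i0:ℕ) = 0) (l : Fin n → ℤ) (hl : IsCLV n l) :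
    ∃ ν : ℕ, 1 ≤ ν ∧ gfun (p i0) ν ≤ Rstar n l p := by
  set μ : ℕ := (l i0).toNat with hμdef
  have hl1 : 1 ≤ l i0 := hl.1 i0
  have hμ1 : 1 ≤ μ := by omega
  have hμZ : ((μ:ℤ)) = l i0 := Int.toNat_of_nonneg (by omega)
  have hμR : ((μ:ℝ)) = ((l i0 : ℤ) : ℝ) := by exact_mod_cast hμZ
  set R := Rstar n l p with hR
  have hbdd : BddAbove (Set.range fun i : Fin n => ((l i : ℝ) + Real.logb 2 (p i))) :=
    (Set.finite_range _).bddAbove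
  have hle : ∀ i, (l i : ℝ) + Real.logb 2 (p i) ≤ R := fun i => le_ciSup hbdd i
  have hp0 : 0 < p i0 := hp.1 i0
  -- p i0 < 1
  have i1 : Fin n := ⟨1, by omega⟩
  have hi1mem : (⟨1, by omega⟩ : Fin n) ∈ Finset.univ.erase i0 := by
    refine Finset.mem_erase.mpr ⟨?_, Finset.mem_univ _⟩
    intro h; apply_fun (Fin.val) at h; simp [h0] at h
  have herase := Finset.sum_erase_add Finset.univ p (Finset.mem_univ i0)
  have hsumpos : 0 < ∑ i ∈ Finset.univ.erase i0, p i :=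
    Finset.sum_pos (fun i _ => hp.1 i) ⟨_, hi1mem⟩
  have hplt1 : p i0 < 1 := by
    have := hp.2.1; linarith
  have h1q : 0 < 1 - p i0 := by linarith
  -- pointwise bound
  have hstep : ∀ i : Fin n, p i ≤ (2:ℝ) ^ R * (2:ℝ) ^ (-(l i)) := by
    intro i
    have h1 : Real.logb 2 (p i) ≤ R - (l i : ℝ) := by linarith [hle i]
    have h2 := Real.rpow_le_rpow_of_exponent_le one_le_two h1
    rw [Real.rpow_logb two_pos (by norm_num) (hp.1 i)] at h2
    calc p i ≤ (2:ℝ) ^ (R - (l i : ℝ)) := h2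
      _ = (2:ℝ) ^ R * (2:ℝ) ^ (-(l i)) := by
          rw [Real.rpow_sub two_pos, Real.rpow_intCast, div_eq_mul_inv, ← zpow_neg]
  -- Kraft tail bound
  have hkrafterase := Finset.sum_erase_add Finset.univ (fun i => (2:ℝ) ^ (-(l i)))
    (Finset.mem_univ i0)
  have hRpos : (0:ℝ) < (2:ℝ) ^ R := Real.rpow_pos_of_pos two_pos R
  have hsum : 1 - p i0 ≤ (2:ℝ) ^ R * (1 - (2:ℝ) ^ (-(l i0))) := by
    have hA : 1 - p i0 = ∑ i ∈ Finset.univ.erase i0, p i := by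
      have := hp.2.1; linarith
    have hB : ∑ i ∈ Finset.univ.erase i0, p i ≤
        ∑ i ∈ Finset.univ.erase i0, (2:ℝ) ^ R * (2:ℝ) ^ (-(l i)) :=
      Finset.sum_le_sum fun i _ => hstep i
    have hC : ∑ i ∈ Finset.univ.erase i0, (2:ℝ) ^ R * (2:ℝ) ^ (-(l i)) =
        (2:ℝ) ^ R * ∑ i ∈ Finset.univ.erase i0, (2:ℝ) ^ (-(l i)) :=
      (Finset.mul_sum _ _ _).symm
    have hD : ∑ i ∈ Finset.univ.erase i0, (2:ℝ) ^ (-(l i)) ≤ 1 - (2:ℝ) ^ (-(l i0)) := by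
      have := hl.2; linarith
    nlinarith [hRpos, hD]
  -- rewrite 2^(-l i0) as (2^μ)⁻¹
  set P : ℝ := (2:ℝ) ^ μ with hPdef
  have hP2 : (2:ℝ) ≤ P := by
    calc (2:ℝ) = 2 ^ 1 := (pow_one 2).symm
    _ ≤ 2 ^ μ := pow_le_pow_right₀ one_le_two hμ1
  have hPpos : (0:ℝ) < P := by positivity
  have hzeq : (2:ℝ) ^ (-(l i0)) = P⁻¹ := by
    rw [← hμZ, zpow_neg, zpow_natCast]
  have hsum2 : 1 - p i0 ≤ (2:ℝ) ^ R * ((P - 1) / P) := by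
    rw [hzeq] at hsum
    have : 1 - P⁻¹ = (P - 1) / P := by field_simp
    rwa [this] at hsum
  have hP1 : (0:ℝ) < P - 1 := by linarith
  have hargpos : 0 < (1 - p i0) / (P - 1) * P := by positivity
  have hdivle : (1 - p i0) / (P - 1) * P ≤ (2:ℝ) ^ R := by
    rw [div_mul_eq_mul_div, div_le_iff₀ hP1]
    calc (1 - p i0) * P ≤ ((2:ℝ) ^ R * ((P - 1) / P)) * P := by nlinarith
      _ = (2:ℝ) ^ R * (P - 1) := by field_simp
  have hlogb : Real.logb 2 ((1 - p i0) / (P - 1) * P) ≤ R :=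
    (Real.logb_le_iff_le_rpow one_lt_two hargpos).mpr hdivle
  have hlogsplit : Real.logb 2 ((1 - p i0) / (P - 1) * P) =
      Real.logb 2 ((1 - p i0) / (P - 1)) + (μ:ℝ) := by
    rw [Real.logb_mul (by positivity) (by positivity), hPdef, Real.logb_pow]
    simp [Real.logb_self_eq_one]
  have hB' : (μ:ℝ) + Real.logb 2 ((1 - p i0) / (P - 1)) ≤ R := by
    rw [hlogsplit] at hlogb; linarith
  have hA' : (μ:ℝ) + Real.logb 2 (p i0) ≤ R := by
    rw [hμR]; exact hle i0
  refine ⟨μ, hμ1, ?_⟩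
  unfold gfun
  rcases max_choice (p i0) ((1 - p i0) / ((2:ℝ) ^ μ - 1)) with h | h <;> rw [h]
  · exact hA'
  · exact hB'

theorem stmt9 (n : ℕ) (hn : 2 ≤ n) (p : Fin n → ℝ) (hp : IsSource n p) :
    ∃ μ : ℕ, 1 ≤ μ ∧
      (∀ ν : ℕ, 1 ≤ ν →
        (μ:ℝ) + Real.logb 2 (max (p ⟨0, by omega⟩)
            ((1 - p ⟨0, by omega⟩) / ((2:ℝ) ^ μ - 1))) ≤
          (ν:ℝ) + Real.logb 2 (max (p ⟨0, by omega⟩)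
            ((1 - p ⟨0, by omega⟩) / ((2:ℝ) ^ ν - 1)))) ∧
      (μ:ℝ) + Real.logb 2 (max (p ⟨0, by omega⟩)
          ((1 - p ⟨0, by omega⟩) / ((2:ℝ) ^ μ - 1))) ≤ RstarOpt n p := by
  have h0 : ((⟨0, by omega⟩ : Fin n) : ℕ) = 0 := rfl
  obtain ⟨μ, hμ1, hmin⟩ := exists_min_gfun (p ⟨0, by omega⟩) (hp.1 _)
  refine ⟨μ, hμ1, fun ν hν => hmin ν hν, ?_⟩
  -- lower bound on RstarOpt
  have hne : ∃ r, r ∈ {r : ℝ | ∃ l : Fin n → ℤ, IsCLV n l ∧ Rstar n l p = r} := by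
    refine ⟨Rstar n (fun _ => (n:ℤ)) p, fun _ => (n:ℤ), ⟨?_, ?_⟩, rfl⟩
    · intro i; show (1:ℤ) ≤ (n:ℤ); exact_mod_cast by omega
    · have : ∑ _i : Fin n, (2:ℝ) ^ (-(n:ℤ)) = n * (2:ℝ) ^ (-(n:ℤ)) := by
        rw [Finset.sum_const, Finset.card_univ, Fintype.card_fin, nsmul_eq_mul]
      rw [this, zpow_neg, zpow_natCast]
      have hn2 : (n:ℝ) ≤ 2 ^ n := by exact_mod_cast (Nat.lt_two_pow_self (n := n)).le
      have hpos : (0:ℝ) < 2 ^ n := by positivity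
      calc (n:ℝ) * ((2:ℝ) ^ n)⁻¹ ≤ 2 ^ n * ((2:ℝ) ^ n)⁻¹ :=
            mul_le_mul_of_nonneg_right hn2 (by positivity)
        _ = 1 := mul_inv_cancel₀ (ne_of_gt hpos)
  apply le_csInf hne
  rintro r ⟨l, hl, rfl⟩
  obtain ⟨ν, hν1, hkey⟩ := key_ineq n hn p hp ⟨0, by omega⟩ h0 l hl
  exact le_trans (hmin ν hν1) hkey
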